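/- Let R* > 0, let q₁ be a class-K∞ function, v* > 0, and let φ : ℝⁿ → ℝˡ satisfy q₁(‖y‖) ≤ ⟨w, φ(y)⟩ for all y in the closed ball B_{R*} and all w in a set 𝕎 ⊂ {w : ‖w‖ ≤ w̄}, and be Lipschitz with constant L_φ on B_{R*}. Let Γ ∈ ℝ^{p×p} be symmetric positive definite, θ, θ̂_k ∈ ℝᵖ, w_k ∈ 𝕎, and let D : ℝⁿ → ℝⁿ be continuous with ‖D(y)‖ ≤ F̄ on B_{R*}. Let δ > 0 and x : [0,δ] → B_{R*} be continuous with x(t) = x_k + ∫₀ᵗ D(x(s)) ds. If ⟨w_k, φ(x_k)⟩ + ½ (θ − θ̂_k)ᵀ Γ⁻¹ (θ − θ̂_k) ≤ 3v*/4 and w̄ L_φ δ F̄ ≤ v*/4, then for all t ∈ [0,δ] one has q₁(‖x(t)‖) ≤ v*, i.e. ‖x(t)‖ ≤ q₁⁻¹(v*). -/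

import Mathlib

open scoped RealInnerProductSpace
open Set Matrix Metric

noncomputable section

/-- `ℝⁿ` with the Euclidean norm. -/
abbrev Evec (n : ℕ) := EuclideanSpace ℝ (Fin n)

/-- Action of a real `m × n` matrix on a Euclidean vector. -/
noncomputable def mVec {m n : ℕ} (A : Matrix (Fin m) (Fin n) ℝ) (v : Evec n) : Evec m :=
  (EuclideanSpace.equiv (Fin m) ℝ).symm (A.mulVec ((EuclideanSpace.equiv (Fin n) ℝ) v))

/-- A class-`K` function: continuous, strictly increasing on `[0,∞)` and vanishing at `0`. -/
def IsClassK (α : ℝ → ℝ) : Prop :=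
  ContinuousOn α (Ici 0) ∧ StrictMonoOn α (Ici 0) ∧ α 0 = 0 ∧ ∀ s ≥ (0:ℝ), 0 ≤ α s

/-- A class-`K∞` function: class `K` and unbounded. -/
def IsClassKInf (α : ℝ → ℝ) : Prop :=
  IsClassK α ∧ Filter.Tendsto α Filter.atTop Filter.atTop

/-- Once the composite Lyapunov value is below `3v*/4` at a sampling instant, the state
stays in the target sublevel set `q₁(‖x‖) ≤ v*` throughout the sampling interval,
provided the sampling time is small enough. -/
theorem stmt9
    {n p l : ℕ} (Rs : ℝ) (hRs : 0 < Rs)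
    (q₁ : ℝ → ℝ) (hq₁ : IsClassKInf q₁) (vs : ℝ) (hvs : 0 < vs)
    (φ : Evec n → Evec l) (W : Set (Evec l)) (wb : ℝ)
    (hWb : ∀ w ∈ W, ‖w‖ ≤ wb)
    (hφlb : ∀ y ∈ closedBall (0:Evec n) Rs, ∀ w ∈ W, q₁ ‖y‖ ≤ ⟪w, φ y⟫)
    (Lφ : ℝ)
    (hLφ : ∀ y ∈ closedBall (0:Evec n) Rs, ∀ y' ∈ closedBall (0:Evec n) Rs,
      ‖φ y - φ y'‖ ≤ Lφ * ‖y - y'‖)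
    (Γ : Matrix (Fin p) (Fin p) ℝ) (hΓ : Γ.PosDef)
    (θ θhk : Evec p) (wk : Evec l) (hwk : wk ∈ W)
    (D : Evec n → Evec n) (hDc : Continuous D) (Fb : ℝ)
    (hDb : ∀ y ∈ closedBall (0:Evec n) Rs, ‖D y‖ ≤ Fb)
    (δ : ℝ) (hδ : 0 < δ)
    (xk : Evec n) (x : ℝ → Evec n)
    (hxc : ContinuousOn x (Icc 0 δ))
    (hxball : ∀ t ∈ Icc (0:ℝ) δ, x t ∈ closedBall (0:Evec n) Rs)
    (hxeq : ∀ t ∈ Icc (0:ℝ) δ, x t = xk + ∫ s in (0:ℝ)..t, D (x s))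
    (hVc : ⟪wk, φ xk⟫ + (1/2) * ⟪θ - θhk, mVec Γ⁻¹ (θ - θhk)⟫ ≤ 3 * vs / 4)
    (hδsmall : wb * Lφ * δ * Fb ≤ vs / 4) :
    ∀ t ∈ Icc (0:ℝ) δ, q₁ ‖x t‖ ≤ vs := by
  intro t ht
  -- basic facts
  have hxk : xk = x 0 := by
    have := hxeq 0 ⟨le_refl 0, le_of_lt hδ⟩
    simpa using this.symm
  have hxkball : xk ∈ closedBall (0:Evec n) Rs := by
    rw [hxk]; exact hxball 0 ⟨le_refl 0, le_of_lt hδ⟩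
  have hFb0 : 0 ≤ Fb := le_trans (norm_nonneg _) (hDb xk hxkball)
  have hwb0 : 0 ≤ wb := le_trans (norm_nonneg wk) (hWb wk hwk)
  -- quadratic term nonneg
  have hquad : 0 ≤ ⟪θ - θhk, mVec Γ⁻¹ (θ - θhk)⟫ := by
    have h := (hΓ.inv.posSemidef).dotProduct_mulVec_nonneg ((EuclideanSpace.equiv (Fin p) ℝ) (θ - θhk))
    simpa [mVec, PiLp.inner_apply, dotProduct, mulVec, mul_comm] using h
  have hVk : ⟪wk, φ xk⟫ ≤ 3 * vs / 4 := by nlinarith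
  -- drift bound
  have hdrift : ‖x t - xk‖ ≤ δ * Fb := by
    have hx := hxeq t ht
    have : x t - xk = ∫ s in (0:ℝ)..t, D (x s) := by rw [hx]; abel
    rw [this]
    have hb : ∀ s ∈ Set.Ioc (0:ℝ) t, ‖D (x s)‖ ≤ Fb := by
      intro s hs
      exact hDb _ (hxball s ⟨le_of_lt hs.1, le_trans hs.2 ht.2⟩)
    have := intervalIntegral.norm_integral_le_of_norm_le_const (a := 0) (b := t)
      (C := Fb) (f := fun s => D (x s)) (by
        intro s hs
        rw [Set.uIoc_of_le ht.1] at hs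
        exact hb s hs)
    calc ‖∫ s in (0:ℝ)..t, D (x s)‖ ≤ Fb * |t - 0| := this
      _ = Fb * t := by rw [sub_zero, abs_of_nonneg ht.1]
      _ ≤ δ * Fb := by nlinarith [ht.2]
  -- inner product perturbation
  have hxt := hxball t ht
  have hφd : ‖φ (x t) - φ xk‖ ≤ Lφ * ‖x t - xk‖ := hLφ _ hxt _ hxkball
  have hLd0 : 0 ≤ Lφ * ‖x t - xk‖ := le_trans (norm_nonneg _) hφd
  have hpert : ⟪wk, φ (x t)⟫ ≤ ⟪wk, φ xk⟫ + vs / 4 := by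
    have h1 : ⟪wk, φ (x t)⟫ - ⟪wk, φ xk⟫ = ⟪wk, φ (x t) - φ xk⟫ := by
      rw [inner_sub_right]
    have h2 : ⟪wk, φ (x t) - φ xk⟫ ≤ ‖wk‖ * ‖φ (x t) - φ xk‖ :=
      real_inner_le_norm _ _
    have h3 : ‖wk‖ * ‖φ (x t) - φ xk‖ ≤ wb * (Lφ * ‖x t - xk‖) := by
      apply mul_le_mul (hWb wk hwk) hφd (norm_nonneg _) hwb0
    have h4 : wb * (Lφ * ‖x t - xk‖) ≤ vs / 4 := by
      rcases eq_or_lt_of_le (norm_nonneg (x t - xk)) with h | h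
      · rw [← h, mul_zero, mul_zero]; positivity
      · have hL0 : 0 ≤ Lφ := nonneg_of_mul_nonneg_right (by linarith [hLd0] : (0:ℝ) ≤ ‖x t - xk‖ * Lφ) h
        calc wb * (Lφ * ‖x t - xk‖) ≤ wb * (Lφ * (δ * Fb)) := by
              apply mul_le_mul_of_nonneg_left _ hwb0
              exact mul_le_mul_of_nonneg_left hdrift hL0
          _ = wb * Lφ * δ * Fb := by ring
          _ ≤ vs / 4 := hδsmall
    linarith
  have := hφlb (x t) hxt wk hwk
  linarith
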